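/- Under Assumption 1, suppose c : [0,T] → ℝ² is continuous with T > 0, c(t) ∈ (0,R)×(0,H) for all t ∈ [0,T), c restricted to [0,T) is a characteristic curve, and c(T) ∈ [0,R]×[0,H]. Then both coordinates of c(T) are strictly positive: c(T).1 > 0 and c(T).2 > 0. (This is the paper's Proposition that no characteristic curve starting in the open domain may intersect the axes r = 0 or z = 0, since the circulation Γ is positive on the interior, vanishes on the axes, and is conserved along characteristic curves.) -/

import Mathlib

open Set

/-- Circulation `Γ(r,z) = r·φ(r)·ψ(z)`. -/
noncomputable def circ (φ ψ : ℝ → ℝ) (p : ℝ × ℝ) : ℝ := p.1 * φ p.1 * ψ p.2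

/-- Vertical vorticity `ζ(r,z) = g'(r)·ψ(z)/r` where `g(r) = r·φ(r)`. -/
noncomputable def zeta (φ ψ : ℝ → ℝ) (r z : ℝ) : ℝ :=
  deriv (fun s => s * φ s) r * ψ z / r

/-- Radial vorticity `η(r,z) = −φ(r)·ψ'(z)`. -/
noncomputable def eta (φ ψ : ℝ → ℝ) (r z : ℝ) : ℝ := -(φ r * deriv ψ z)

/-- A characteristic curve on an interval `I`: a differentiable curve
`c(t) = (r(t), z(t))` with `r(t) > 0` satisfying `r' = η(r,z)`, `z' = ζ(r,z)` on `I`. -/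
def IsCharCurve (φ ψ : ℝ → ℝ) (I : Set ℝ) (c : ℝ → ℝ × ℝ) : Prop :=
  (∀ t ∈ I, 0 < (c t).1) ∧
  ∀ t ∈ I,
    HasDerivWithinAt c
      (eta φ ψ (c t).1 (c t).2, zeta φ ψ (c t).1 (c t).2) I t

/-- No characteristic curve that stays in the open domain may intersect the axes
`r = 0` or `z = 0`: if the curve has a continuous extension to the closed domain at a
final time `T`, then both coordinates at time `T` are still strictly positive. -/
theorem characteristic_cannot_reach_axes
    (R H : ℝ) (hR : 0 < R) (hH : 0 < H)
    (φ ψ : ℝ → ℝ)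
    (hφC2 : ContDiff ℝ 2 φ) (hψC2 : ContDiff ℝ 2 ψ)
    (hφ0 : φ 0 = 0) (hψ0 : ψ 0 = 0)
    (hφpos : ∀ r ∈ Ioo (0:ℝ) R, 0 < φ r)
    (hψpos : ∀ z ∈ Ioo (0:ℝ) H, 0 < ψ z)
    (r_o : ℝ) (hro : r_o ∈ Ioo (0:ℝ) R)
    (z_o : ℝ) (hzo : z_o ∈ Ioo (0:ℝ) H)
    (hg'ro : deriv (fun s => s * φ s) r_o = 0)
    (hg'ne : ∀ r ∈ Ioo (0:ℝ) R, r ≠ r_o → deriv (fun s => s * φ s) r ≠ 0)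
    (hψ'zo : deriv ψ z_o = 0)
    (hψ'ne : ∀ z ∈ Ioo (0:ℝ) H, z ≠ z_o → deriv ψ z ≠ 0)
    (hgmax : ∀ r ∈ Ioo (0:ℝ) R, r * φ r ≤ r_o * φ r_o)
    (hψmax : ∀ z ∈ Ioo (0:ℝ) H, ψ z ≤ ψ z_o)
    (T : ℝ) (hT : 0 < T)
    (c : ℝ → ℝ × ℝ) (hcont : ContinuousOn c (Icc 0 T))
    (hcin : ∀ t ∈ Ico (0:ℝ) T, c t ∈ Ioo (0:ℝ) R ×ˢ Ioo (0:ℝ) H)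
    (hc : IsCharCurve φ ψ (Ico 0 T) c)
    (hcT : c T ∈ Icc (0:ℝ) R ×ˢ Icc (0:ℝ) H) :
    0 < (c T).1 ∧ 0 < (c T).2 := by

  classical
  -- Notation
  set g : ℝ → ℝ := fun s => s * φ s with hg_def
  have hgdiff : Differentiable ℝ g :=
    (differentiable_id.mul (hφC2.differentiable (by norm_num)))
  have hψdiff : Differentiable ℝ ψ := hψC2.differentiable (by norm_num)
  set Γc : ℝ → ℝ := fun t => circ φ ψ (c t) with hΓc_def
  -- derivative of Γ along the curve is zero on Ico 0 T
  have hderiv0 : ∀ t ∈ Ico (0:ℝ) T, HasDerivWithinAt Γc 0 (Ico 0 T) t := by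
    intro t ht
    have hct := hc.2 t ht
    have hrpos := hc.1 t ht
    have hr' : HasDerivWithinAt (fun t => (c t).1)
        (eta φ ψ (c t).1 (c t).2) (Ico 0 T) t := hct.fst
    have hz' : HasDerivWithinAt (fun t => (c t).2)
        (zeta φ ψ (c t).1 (c t).2) (Ico 0 T) t := hct.snd
    have hgr : HasDerivWithinAt (fun t => g ((c t).1))
        (deriv g ((c t).1) * eta φ ψ (c t).1 (c t).2) (Ico 0 T) t :=
      by have := ((hgdiff ((c t).1)).hasDerivAt).comp_hasDerivWithinAt t hr'; exact this
    have hψz : HasDerivWithinAt (fun t => ψ ((c t).2))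
        (deriv ψ ((c t).2) * zeta φ ψ (c t).1 (c t).2) (Ico 0 T) t :=
      ((hψdiff ((c t).2)).hasDerivAt).comp_hasDerivWithinAt t hz'
    have hmul := hgr.mul hψz
    have heq : deriv g ((c t).1) * eta φ ψ (c t).1 (c t).2 * ψ ((c t).2)
        + g ((c t).1) * (deriv ψ ((c t).2) * zeta φ ψ (c t).1 (c t).2) = 0 := by
      have hrne : ((c t).1 : ℝ) ≠ 0 := ne_of_gt hrpos
      simp only [eta, zeta, hg_def]
      field_simp
      ring
    have : HasDerivWithinAt (fun t => g ((c t).1) * ψ ((c t).2)) 0 (Ico 0 T) t := by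
      rw [heq] at hmul; exact hmul
    simpa [hΓc_def, circ, hg_def] using this
  -- Γc is constant on Ico 0 T
  have hconst : ∀ t ∈ Ico (0:ℝ) T, Γc t = Γc 0 := by
    intro t ht
    have h0 : (0:ℝ) ∈ Ico (0:ℝ) T := ⟨le_refl _, hT⟩
    have := (convex_Ico (0:ℝ) T).norm_image_sub_le_of_norm_hasDerivWithin_le
      (f' := fun _ => (0:ℝ)) (C := 0) (fun x hx => hderiv0 x hx)
      (fun x _ => by simp) h0 ht
    have h' : ‖Γc t - Γc 0‖ ≤ 0 := by simpa using this
    have := norm_nonneg (Γc t - Γc 0)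
    have : ‖Γc t - Γc 0‖ = 0 := le_antisymm h' this
    have := norm_eq_zero.mp this
    linarith [sub_eq_zero.mp this]
  -- value of Γ at time 0 is positive
  have hc0 := hcin 0 ⟨le_refl _, hT⟩
  have hΓ0pos : 0 < Γc 0 := by
    have h1 := hc0.1
    have h2 := hc0.2
    have hφp := hφpos _ h1
    have hψp := hψpos _ h2
    simp only [hΓc_def, circ]
    exact mul_pos (mul_pos h1.1 hφp) hψp
  -- Γc is continuous on Icc 0 T
  have hΓcont : ContinuousOn Γc (Icc 0 T) := by
    have hcirc : Continuous (circ φ ψ) := by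
      unfold circ
      exact (continuous_fst.mul ((hφC2.continuous).comp continuous_fst)).mul
        ((hψC2.continuous).comp continuous_snd)
    exact hcirc.comp_continuousOn hcont
  -- extend constancy to T by continuity
  have hTmem : T ∈ Icc (0:ℝ) T := ⟨hT.le, le_refl _⟩
  have hTcl : T ∈ closure (Ico (0:ℝ) T) := by
    rw [closure_Ico hT.ne]; exact ⟨hT.le, le_refl _⟩
  have hne : (nhdsWithin T (Ico (0:ℝ) T)).NeBot :=
    mem_closure_iff_nhdsWithin_neBot.mp hTcl
  have h1 : Filter.Tendsto Γc (nhdsWithin T (Ico (0:ℝ) T)) (nhds (Γc T)) :=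
    ((hΓcont T hTmem).mono Ico_subset_Icc_self).tendsto
  have h2 : Filter.Tendsto Γc (nhdsWithin T (Ico (0:ℝ) T)) (nhds (Γc 0)) :=
    Filter.Tendsto.congr' (eventually_mem_nhdsWithin.mono fun t ht =>
      (hconst t ht).symm) tendsto_const_nhds
  have hΓT : Γc T = Γc 0 := tendsto_nhds_unique h1 h2
  have hΓTpos : 0 < circ φ ψ (c T) := by rw [show circ φ ψ (c T) = Γc T from rfl, hΓT]; exact hΓ0pos
  -- conclude
  constructor
  · rcases lt_or_eq_of_le hcT.1.1 with h | h
    · exact h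
    · exfalso
      have : circ φ ψ (c T) = 0 := by simp [circ, ← h]
      rw [this] at hΓTpos; exact lt_irrefl 0 hΓTpos
  · rcases lt_or_eq_of_le hcT.2.1 with h | h
    · exact h
    · exfalso
      have : circ φ ψ (c T) = 0 := by simp [circ, ← h, hψ0]
      rw [this] at hΓTpos; exact lt_irrefl 0 hΓTpos
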